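/- Let φ ∈ ℝ⟦λ⟧ be the unique formal power series with constant coefficient 0 satisfying φ = λ·(1+φ)⁴. Then the identity λ·(256λ − 27)·φ′ = 12λφ³ + 52λφ² + 4λφ − 36λ + 9φ holds in ℝ⟦λ⟧, where φ′ denotes the formal derivative of φ with respect to λ. -/

import Mathlib

open PowerSeries in
/-- Let `φ ∈ ℝ⟦λ⟧` be the unique formal power series with constant
coefficient `0` satisfying `φ = λ·(1+φ)⁴`.  Then
`λ·(256λ − 27)·φ′ = 12λφ³ + 52λφ² + 4λφ − 36λ + 9φ` in `ℝ⟦λ⟧`. -/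
theorem tutte_root_derivative_identity (φ : PowerSeries ℝ)
    (hφ0 : constantCoeff φ = 0)
    (hφ : φ = X * (1 + φ) ^ 4) :
    X * (256 * X - 27) * (d⁄dX ℝ φ) =
      12 * X * φ ^ 3 + 52 * X * φ ^ 2 + 4 * X * φ - 36 * X + 9 * φ := by
  have h : X * (1 + φ) ^ 4 = φ := hφ.symm
  have hd : d⁄dX ℝ φ = d⁄dX ℝ (X * (1 + φ) ^ 4) := by rw [← hφ]
  rw [Derivation.leibniz, Derivation.leibniz_pow, derivative_X, map_add,
    Derivation.map_one_eq_zero, zero_add] at hd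
  simp only [smul_eq_mul, mul_one] at hd
  -- hd : d⁄dX φ = X * (4 * (1+φ)^3 * d⁄dX φ) + (1+φ)^4 (up to arrangement)
  have key : (1 - 3 * φ) * (d⁄dX ℝ φ) = (1 + φ) ^ 5 := by
    linear_combination (1 + φ) * hd + 4 * (d⁄dX ℝ φ) * h
  have hne : (1 - 3 * φ : PowerSeries ℝ) ≠ 0 := by
    intro hz
    have := congrArg (constantCoeff) hz
    simp [hφ0] at this
  apply mul_left_cancel₀ hne
  linear_combination (X * (256 * X - 27)) * key + ((256 * X - 27) * (1 + φ) + 36) * h
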